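/- arXiv:2104.11613 — 2 statements merged into one kernel-verified Lean document; each statement's English description precedes it below -/
import Mathlib

section
/- For every ordinal α > ω, the partition relation α → (|α|+1, ω)² fails; that is, there exists a 2-coloring of the 2-element subsets of α with no 0-monochromatic subset of order type |α|+1 and no 1-monochromatic subset of order type ω. -/
open Ordinal Set

noncomputable def otype (A : Set Ordinal) : Ordinal.{1} :=
  Ordinal.type ((· < ·) : A → A → Prop)

def MonoColor (f : Finset Ordinal → Fin 2) (S : Set Ordinal) (c : Fin 2) : Prop :=
  ∀ x ∈ S, ∀ y ∈ S, x ≠ y → f {x, y} = c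

def PartRel (α β γ : Ordinal.{0}) : Prop :=
  ∀ f : Finset Ordinal → Fin 2,
    (∃ B ⊆ Set.Iio α, otype B = Ordinal.lift.{1} β ∧ MonoColor f B 0) ∨
    (∃ C ⊆ Set.Iio α, otype C = Ordinal.lift.{1} γ ∧ MonoColor f C 1)

def Indecomp (α : Ordinal) : Prop := ∀ β < α, ∀ γ < α, β + γ < α

lemma otype_Iio (o : Ordinal) : otype (Set.Iio o) = Ordinal.lift.{1} o := by
  have := Ordinal.typein_ordinal o
  rw [← Ordinal.type_subrel] at this
  exact this

theorem stmt0 (α : Ordinal) (hα : Ordinal.omega0 < α) :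
    ¬ PartRel α (α.card.ord + 1) Ordinal.omega0 := by
  classical
  intro hP
  set κ := α.card.ord with hκ
  have hcard : Cardinal.mk (Set.Iio α) = Cardinal.mk (Set.Iio κ) := by
    rw [Ordinal.mk_Iio_ordinal, Ordinal.mk_Iio_ordinal, hκ, Cardinal.card_ord]
  obtain ⟨g⟩ := Cardinal.eq.mp hcard
  set g' : Ordinal → Ordinal := fun x => if h : x < α then (g ⟨x, h⟩ : Ordinal) else 0
    with hg'
  have hg'eq : ∀ x (h : x < α), g' x = (g ⟨x, h⟩ : Ordinal) := fun x h => dif_pos h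
  have hg'inj : ∀ x (hx : x < α) y (hy : y < α), g' x = g' y → x = y := by
    intro x hx y hy h
    rw [hg'eq x hx, hg'eq y hy] at h
    have := g.injective (Subtype.ext h)
    exact congrArg Subtype.val this
  set f : Finset Ordinal → Fin 2 :=
    fun s => if ∃ x ∈ s, ∃ y ∈ s, x < y ∧ g' x < g' y then 0 else 1 with hf
  have key : ∀ x y : Ordinal, x < y →
      (f {x, y} = 0 ↔ g' x < g' y) := by
    intro x y hxy
    constructor
    · intro h0
      by_contra hc
      have hcond : ¬ ∃ a ∈ ({x, y} : Finset Ordinal), ∃ b ∈ ({x, y} : Finset Ordinal),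
          a < b ∧ g' a < g' b := by
        rintro ⟨a, ha, b, hb, hab, hgab⟩
        simp only [Finset.mem_insert, Finset.mem_singleton] at ha hb
        rcases ha with rfl | rfl <;> rcases hb with rfl | rfl
        · exact absurd hab (lt_irrefl _)
        · exact hc hgab
        · exact absurd (hxy.trans hab) (lt_irrefl _)
        · exact absurd hab (lt_irrefl _)
      have : f {x, y} = 1 := by rw [hf]; exact if_neg hcond
      rw [h0] at this
      exact absurd this (by decide)
    · intro h
      rw [hf]
      exact if_pos ⟨x, by simp, y, by simp, hxy, h⟩
  rcases hP f with ⟨B, hB, hBt, hBm⟩ | ⟨C, hC, hCt, hCm⟩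
  · -- 0-homogeneous set of type κ+1: embeds into Iio κ, contradiction
    have mono : ∀ a b : B, (a : Ordinal) < b →
        (g ⟨a, hB a.2⟩ : Set.Iio κ) < g ⟨b, hB b.2⟩ := by
      intro a b hab
      have h0 : f {(a : Ordinal), (b : Ordinal)} = 0 := hBm a a.2 b b.2 (ne_of_lt hab)
      have := (key a b hab).mp h0
      rw [hg'eq a (hB a.2), hg'eq b (hB b.2)] at this
      exact this
    have hsm : StrictMono (fun a : B => (g ⟨a.1, hB a.2⟩ : Set.Iio κ)) := by
      intro a b hab
      exact mono a b hab
    have emb : ((· < ·) : B → B → Prop) ↪r ((· < ·) : Set.Iio κ → Set.Iio κ → Prop) :=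
      ⟨⟨fun a => g ⟨a.1, hB a.2⟩, hsm.injective⟩, by
        intro a b
        exact hsm.lt_iff_lt⟩
    have hle : otype B ≤ otype (Set.Iio κ) := Ordinal.type_le_iff'.mpr ⟨emb⟩
    rw [hBt, otype_Iio] at hle
    have : Ordinal.lift.{1} κ < Ordinal.lift.{1} (κ + 1) := by
      rw [Ordinal.lift_lt]
      exact Order.lt_succ κ
    exact absurd hle (not_le.mpr this)
  · -- 1-homogeneous set of type ω: gives a descending sequence
    have hiso : Nonempty (((· < ·) : ℕ → ℕ → Prop) ≃r ((· < ·) : C → C → Prop)) := by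
      rw [← Ordinal.lift_type_eq.{0, 1, 1}]
      rw [Ordinal.type_nat_lt]
      show Ordinal.lift.{1} Ordinal.omega0 = Ordinal.lift.{1} (otype C)
      rw [hCt, Ordinal.lift_id]
    obtain ⟨e⟩ := hiso
    set x : ℕ → Ordinal := fun n => (e n : Ordinal) with hx
    have hxC : ∀ n, x n ∈ C := fun n => (e n).2
    have hxmono : ∀ n, x n < x (n + 1) := by
      intro n
      have : e n < e (n + 1) := e.map_rel_iff.mpr (Nat.lt_succ_self n)
      exact this
    have hdesc : ∀ n, g' (x (n + 1)) < g' (x n) := by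
      intro n
      have h1 : f {x n, x (n + 1)} = 1 :=
        hCm _ (hxC n) _ (hxC (n + 1)) (ne_of_lt (hxmono n))
      have hnot : ¬ g' (x n) < g' (x (n + 1)) := by
        intro h
        have := (key _ _ (hxmono n)).mpr h
        rw [h1] at this
        exact absurd this (by decide)
      have hne : g' (x (n + 1)) ≠ g' (x n) := by
        intro h
        exact absurd (hg'inj _ (hC (hxC (n + 1))) _ (hC (hxC n)) h)
          (ne_of_gt (hxmono n))
      exact lt_of_le_of_ne (not_lt.mp hnot) hne
    exact (RelEmbedding.natGT (fun n => g' (x n)) hdesc).not_wellFounded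
      Ordinal.lt_wf
end

section
/- Every ordinal is a 'strong type': if β is an ordinal and D ⊆ β, then there exist finitely many sets D₁, …, Dₙ ⊆ D whose union is D, such that the order type of each Dᵢ is additively indecomposable, and for every M ⊆ D, if the order type of M ∩ Dᵢ is at least the order type of Dᵢ for each i, then the order type of M equals the order type of D. -/
open Ordinal Set

lemma otype_mono {A B : Set Ordinal} (h : A ⊆ B) : otype A ≤ otype B :=
  type_le_iff'.2 ⟨⟨⟨Set.inclusion h, Set.inclusion_injective h⟩, Iff.rfl⟩⟩

lemma otype_empty : otype (∅ : Set Ordinal) = 0 := by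
  simp [otype, type_eq_zero_iff_isEmpty]

lemma otype_union {A B : Set Ordinal} (h : ∀ a ∈ A, ∀ b ∈ B, a < b) :
    otype (A ∪ B) = otype A + otype B := by
  classical
  have hdisj : Disjoint A B := by
    rw [Set.disjoint_left]
    exact fun x hxA hxB => lt_irrefl x (h x hxA x hxB)
  rw [otype, otype, otype, ← type_sum_lex]
  refine type_eq.2 ⟨RelIso.mk (Equiv.Set.union hdisj) ?_⟩
  rintro ⟨x, hx⟩ ⟨y, hy⟩
  by_cases hxA : x ∈ A <;> by_cases hyA : y ∈ A
  · simp [Equiv.Set.union_apply_left hdisj, hxA, hyA, Subtype.mk_lt_mk]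
  · have hyB : y ∈ B := hy.resolve_left hyA
    rw [Equiv.Set.union_apply_left hdisj (a := ⟨x, hx⟩) hxA,
      Equiv.Set.union_apply_right hdisj (a := ⟨y, hy⟩) hyB]
    simp [h x hxA y hyB]
  · have hxB : x ∈ B := hx.resolve_left hxA
    rw [Equiv.Set.union_apply_right hdisj (a := ⟨x, hx⟩) hxB,
      Equiv.Set.union_apply_left hdisj (a := ⟨y, hy⟩) hyA]
    simp [Subtype.mk_lt_mk, (h y hyA x hxB).not_gt]
  · have hxB : x ∈ B := hx.resolve_left hxA
    have hyB : y ∈ B := hy.resolve_left hyA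
    rw [Equiv.Set.union_apply_right hdisj (a := ⟨x, hx⟩) hxB,
      Equiv.Set.union_apply_right hdisj (a := ⟨y, hy⟩) hyB]
    simp [Subtype.mk_lt_mk]

lemma otype_inter_Iio {D : Set Ordinal} (a₀ : D) :
    otype (D ∩ Set.Iio (a₀ : Ordinal)) = typein ((· < ·) : D → D → Prop) a₀ := by
  rw [← type_subrel]
  refine type_eq.2 ⟨RelIso.mk ⟨?_, ?_, ?_, ?_⟩ ?_⟩
  · exact fun x => ⟨⟨x.1, x.2.1⟩, show (⟨x.1, x.2.1⟩ : D) < a₀ from Subtype.coe_lt_coe.1 x.2.2⟩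
  · exact fun b => ⟨b.1.1, b.1.2, Set.mem_Iio.2 (Subtype.coe_lt_coe.2 b.2)⟩
  · intro x; rfl
  · intro b; rfl
  · intro x y; exact Iff.rfl

lemma otype_split {D : Set Ordinal} {c : Ordinal.{1}} (hc : c ≤ otype D) :
    ∃ A B : Set Ordinal, A ∪ B = D ∧ (∀ a ∈ A, ∀ b ∈ B, a < b) ∧
      otype A = c ∧ otype A + otype B = otype D := by
  rcases eq_or_lt_of_le hc with h | h
  · refine ⟨D, ∅, by simp, by simp, h.symm, ?_⟩
    rw [otype_empty, add_zero]
  · set r := ((· < ·) : D → D → Prop) with hr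
    set a₀ : D := enum r ⟨c, h⟩ with ha₀
    have hunion : D ∩ Set.Iio (a₀ : Ordinal) ∪ D ∩ Set.Ici (a₀ : Ordinal) = D := by
      ext x
      constructor
      · rintro (⟨hx, -⟩ | ⟨hx, -⟩) <;> exact hx
      · intro hx
        rcases lt_or_ge x (a₀ : Ordinal) with h' | h'
        · exact Or.inl ⟨hx, h'⟩
        · exact Or.inr ⟨hx, h'⟩
    have hpt : ∀ a ∈ D ∩ Set.Iio (a₀ : Ordinal), ∀ b ∈ D ∩ Set.Ici (a₀ : Ordinal), a < b := by
      rintro a ⟨-, ha⟩ b ⟨-, hb⟩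
      exact lt_of_lt_of_le ha hb
    refine ⟨D ∩ Set.Iio (a₀ : Ordinal), D ∩ Set.Ici (a₀ : Ordinal), hunion, hpt, ?_, ?_⟩
    · rw [otype_inter_Iio a₀]
      exact typein_enum r h
    · rw [← otype_union hpt, hunion]

lemma sub_omega0_opow_log_lt {o : Ordinal} (ho : o ≠ 0) :
    ω ^ log ω o + (o - ω ^ log ω o) = o ∧ o - ω ^ log ω o < o := by
  refine ⟨Ordinal.add_sub_cancel_of_le (opow_log_le_self ω ho), ?_⟩
  set e := log ω o with he
  by_contra hlt
  have heq : o - ω ^ e = o := le_antisymm (sub_le_self _ _) (not_lt.1 hlt)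
  have habs : ω ^ e + o = o := by
    conv_lhs => rw [← heq]
    exact Ordinal.add_sub_cancel_of_le (opow_log_le_self ω ho)
  have hn : ∀ n : ℕ, ω ^ e * n + o = o := by
    intro n
    induction n with
    | zero => simp
    | succ k ih =>
      rw [Nat.cast_succ, mul_add, mul_one, add_assoc, habs, ih]
  have hle : ω ^ e * ω ≤ o := by
    rw [mul_le_iff_of_isSuccLimit isSuccLimit_omega0]
    intro b hb
    obtain ⟨n, rfl⟩ := lt_omega0.1 hb
    calc ω ^ e * n ≤ ω ^ e * n + o := le_self_add
      _ = o := hn n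
  rw [← opow_succ] at hle
  exact absurd hle (lt_opow_succ_log_self one_lt_omega0 o).not_ge

theorem stmt5 (β : Ordinal) (D : Set Ordinal) (hD : D ⊆ Set.Iio β) :
    ∃ (n : ℕ) (Ds : Fin n → Set Ordinal),
      (∀ i, Ds i ⊆ D) ∧ (⋃ i, Ds i) = D ∧
      (∀ i, Indecomp (otype (Ds i))) ∧
      (∀ M ⊆ D, (∀ i, otype (Ds i) ≤ otype (M ∩ Ds i)) → otype M = otype D) := by
  clear hD
  suffices H : ∀ o : Ordinal.{1}, ∀ D : Set Ordinal, otype D = o →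
      ∃ (n : ℕ) (Ds : Fin n → Set Ordinal),
        (∀ i, Ds i ⊆ D) ∧ (⋃ i, Ds i) = D ∧
        (∀ i, Indecomp (otype (Ds i))) ∧
        (∀ M ⊆ D, (∀ i, otype (Ds i) ≤ otype (M ∩ Ds i)) → otype M = otype D) by
    exact H (otype D) D rfl
  intro o
  induction o using Ordinal.induction with
  | _ o IH =>
  intro D hwf
  subst hwf
  by_cases hind : Indecomp (otype D)
  · refine ⟨1, fun _ => D, fun _ => subset_rfl, Set.iUnion_const D, fun _ => hind, ?_⟩
    intro M hM hle
    have h0 := hle 0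
    rw [Set.inter_eq_left.2 hM] at h0
    exact le_antisymm (otype_mono hM) h0
  · have ho : otype D ≠ 0 := by
      intro h0
      exact hind (fun b hb => by rw [h0] at hb; exact absurd hb not_lt_zero)
    set e := log ω (otype D) with he
    obtain ⟨hsum, hlt⟩ := _root_.sub_omega0_opow_log_lt ho
    obtain ⟨A, B, hunion, hpt, hA, hAB⟩ := otype_split (opow_log_le_self ω ho)
    have hBsub : B ⊆ D := hunion ▸ Set.subset_union_right
    have hAsub : A ⊆ D := hunion ▸ Set.subset_union_left
    have hB : otype B = otype D - ω ^ e := by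
      have : otype A + otype B = otype A + (otype D - ω ^ e) := by
        rw [hAB, hA, hsum]
      exact (add_right_inj _).1 this
    obtain ⟨m, Es, hEsub, hEunion, hEind, hEmain⟩ := IH (otype B) (hB ▸ hlt) B rfl
    refine ⟨m + 1, Fin.cons A Es, ?_, ?_, ?_, ?_⟩
    · intro i
      refine Fin.cases ?_ ?_ i
      · exact hAsub
      · intro j
        simpa using (hEsub j).trans hBsub
    · rw [← hunion, ← hEunion]
      ext x
      simp only [Set.mem_iUnion, Set.mem_union, Fin.exists_fin_succ, Fin.cons_zero,
        Fin.cons_succ]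
    · intro i
      refine Fin.cases ?_ ?_ i
      · rw [Fin.cons_zero, hA]
        exact fun b hb c hc => principal_add_omega0_opow e hb hc
      · intro j
        simpa using hEind j
    · intro M hM hle
      have hMeq : M ∩ A ∪ M ∩ B = M := by
        rw [← Set.inter_union_distrib_left, hunion, Set.inter_eq_left.2 hM]
      have hpt' : ∀ a ∈ M ∩ A, ∀ b ∈ M ∩ B, a < b := by
        rintro a ⟨-, ha⟩ b ⟨-, hb⟩
        exact hpt a ha b hb
      have hMA : otype (M ∩ A) = ω ^ e := by
        refine le_antisymm ?_ ?_
        · rw [← hA]; exact otype_mono Set.inter_subset_right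
        · have := hle 0
          rw [Fin.cons_zero, hA] at this
          exact this
      have hMB : otype (M ∩ B) = otype B := by
        refine hEmain (M ∩ B) Set.inter_subset_right ?_
        intro j
        have := hle j.succ
        rw [Fin.cons_succ] at this
        have heq2 : M ∩ B ∩ Es j = M ∩ Es j := by
          rw [Set.inter_assoc, Set.inter_eq_self_of_subset_right (hEsub j)]
        rw [heq2]
        exact this
      calc otype M = otype (M ∩ A ∪ M ∩ B) := by rw [hMeq]
        _ = otype (M ∩ A) + otype (M ∩ B) := otype_union hpt'
        _ = otype A + otype B := by rw [hMA, hMB, hA]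
        _ = otype D := hAB
end
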